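/- Let E be an exact category and let A be a full subcategory closed under extensions whose inclusion functor i: A → E admits an exact right adjoint p such that for each object x the counit i p(x) → x is an inclusion. Let B be the full subcategory of objects x with p(x) ≅ 0. Then the assignment q(x) := coker(i p(x) → x) defines an exact left adjoint q to the inclusion j: B → E, the unit x → j q(x) is a projection for every x, and A coincides with the full subcategory of objects x with q(x) ≅ 0. -/

import Mathlib

/-!
Basic definitions: exact (∞-)categories à la Barwick (1-categorical formalization).
An exact structure on an additive category consists of two wide subcategories of
"inclusions" and "projections" subject to the axioms below.
-/

open CategoryTheory CategoryTheory.Limits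

universe w v u v₂ u₂

namespace ExactPaper

variable {E : Type u} [Category.{v} E]

/-- `ι` is a kernel of `f`. -/
def IsKernelι [Preadditive E] {k x y : E} (ι : k ⟶ x) (f : x ⟶ y) : Prop :=
  ∃ w : ι ≫ f = 0, Nonempty (IsLimit (KernelFork.ofι ι w))

/-- `π` is a cokernel of `f`. -/
def IsCokernelπ [Preadditive E] {x y c : E} (f : x ⟶ y) (π : y ⟶ c) : Prop :=
  ∃ w : f ≫ π = 0, Nonempty (IsColimit (CokernelCofork.ofπ π w))

/-- An exact structure on an additive category `E`: two wide subcategories of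
inclusions (`↣`) and projections (`↠`) satisfying Barwick's axioms.  In the axiom
`exact_square`, the square has top edge `i : x ⟶ y`, left edge `p : x ⟶ x'`,
right edge `q : y ⟶ y'` and bottom edge `j : x' ⟶ y'`. -/
structure ExactStructure (E : Type u) [Category.{v} E] [Preadditive E] where
  /-- the class of inclusions -/
  IsIncl : ∀ ⦃x y : E⦄, (x ⟶ y) → Prop
  /-- the class of projections -/
  IsProj : ∀ ⦃x y : E⦄, (x ⟶ y) → Prop
  incl_id : ∀ x : E, IsIncl (𝟙 x)
  incl_comp : ∀ {x y z : E} (f : x ⟶ y) (g : y ⟶ z), IsIncl f → IsIncl g → IsIncl (f ≫ g)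
  proj_id : ∀ x : E, IsProj (𝟙 x)
  proj_comp : ∀ {x y z : E} (f : x ⟶ y) (g : y ⟶ z), IsProj f → IsProj g → IsProj (f ≫ g)
  incl_from_zero : ∀ {z x : E}, IsZero z → ∀ f : z ⟶ x, IsIncl f
  proj_to_zero : ∀ {x z : E}, IsZero z → ∀ f : x ⟶ z, IsProj f
  /-- pushouts of inclusions along arbitrary morphisms exist -/
  pushout_incl : ∀ {x y x' : E} (i : x ⟶ y) (f : x ⟶ x'), IsIncl i →
    ∃ (y' : E) (g : y ⟶ y') (j : x' ⟶ y'), IsPushout i f g j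
  /-- inclusions are stable under pushout -/
  incl_pushout_stable : ∀ {x y x' y' : E} {i : x ⟶ y} {f : x ⟶ x'} {g : y ⟶ y'} {j : x' ⟶ y'},
    IsPushout i f g j → IsIncl i → IsIncl j
  /-- pullbacks of projections along arbitrary morphisms exist -/
  pullback_proj : ∀ {y z z' : E} (p : y ⟶ z) (f : z' ⟶ z), IsProj p →
    ∃ (y' : E) (g : y' ⟶ y) (q : y' ⟶ z'), IsPullback g q p f
  /-- projections are stable under pullback -/
  proj_pullback_stable : ∀ {y' z' y z : E} {g : y' ⟶ y} {q : y' ⟶ z'} {p : y ⟶ z} {f : z' ⟶ z},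
    IsPullback g q p f → IsProj p → IsProj q
  /-- compatibility: the pushout and pullback descriptions of exact squares agree -/
  exact_square : ∀ {x y x' y' : E} (i : x ⟶ y) (p : x ⟶ x') (q : y ⟶ y') (j : x' ⟶ y'),
    i ≫ q = p ≫ j →
    ((IsIncl i ∧ IsProj p ∧ IsPushout i p q j) ↔ (IsIncl j ∧ IsProj q ∧ IsPullback i p q j))

/-- An exact sequence `x ↣ y ↠ z`: an inclusion which is a kernel of a projection
which is in turn a cokernel of the inclusion. -/
def IsExactSeq [Preadditive E] (S : ExactStructure E) {x y z : E} (i : x ⟶ y) (p : y ⟶ z) :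
    Prop :=
  S.IsIncl i ∧ S.IsProj p ∧ IsKernelι i p ∧ IsCokernelπ i p

end ExactPaper

namespace ExactPaper

/-- The kernel of `p : E ⥤ A`: objects `x` with `p(x) ≅ 0`. -/
def pKernel {E : Type u} [Category.{v} E] {A : E → Prop}
    (p : E ⥤ ObjectProperty.FullSubcategory A) : E → Prop :=
  fun x => IsZero ((ObjectProperty.ι A).obj (p.obj x))


/-! ### Auxiliary lemmas -/

section Aux

variable {E : Type u} [Category.{v} E] [Preadditive E]

theorem cokerπ_epi {x y c : E} {f : x ⟶ y} {π : y ⟶ c} (h : IsCokernelπ f π)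
    {T : E} {a b : c ⟶ T} (hab : π ≫ a = π ≫ b) : a = b := by
  obtain ⟨w, ⟨hc⟩⟩ := h
  exact Cofork.IsColimit.hom_ext hc (by simpa using hab)

theorem cokerπ_desc {x y c : E} {f : x ⟶ y} {π : y ⟶ c} (h : IsCokernelπ f π)
    {T : E} (g : y ⟶ T) (hg : f ≫ g = 0) : ∃! d : c ⟶ T, π ≫ d = g := by
  obtain ⟨w, ⟨hc⟩⟩ := h
  obtain ⟨d, hd⟩ := CokernelCofork.IsColimit.desc' hc g hg
  refine ⟨d, by simpa using hd, fun d' hd' => Cofork.IsColimit.hom_ext hc ?_⟩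
  simpa using hd'.trans (by simpa using hd.symm)

theorem kerι_mono {k x y : E} {ι : k ⟶ x} {f : x ⟶ y} (h : IsKernelι ι f)
    {T : E} {a b : T ⟶ k} (hab : a ≫ ι = b ≫ ι) : a = b := by
  obtain ⟨w, ⟨hl⟩⟩ := h
  exact Fork.IsLimit.hom_ext hl (by simpa using hab)

theorem kerι_lift {k x y : E} {ι : k ⟶ x} {f : x ⟶ y} (h : IsKernelι ι f)
    {T : E} (g : T ⟶ x) (hg : g ≫ f = 0) : ∃! l : T ⟶ k, l ≫ ι = g := by
  obtain ⟨w, ⟨hl⟩⟩ := h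
  obtain ⟨l, hlf⟩ := KernelFork.IsLimit.lift' hl g hg
  refine ⟨l, by simpa using hlf, fun l' hl' => Fork.IsLimit.hom_ext hl ?_⟩
  simpa using hl'.trans (by simpa using hlf.symm)

theorem isCokernelπ_mk {x y c : E} {f : x ⟶ y} {π : y ⟶ c} (w : f ≫ π = 0)
    (H : ∀ {T : E} (g : y ⟶ T), f ≫ g = 0 → ∃! d : c ⟶ T, π ≫ d = g) :
    IsCokernelπ f π :=
  ⟨w, ⟨CokernelCofork.IsColimit.ofπ π w (fun g hg => (H g hg).choose)
      (fun g hg => (H g hg).choose_spec.1)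
      (fun g hg m hm => (H g hg).choose_spec.2 m hm)⟩⟩

theorem isKernelι_mk {k x y : E} {ι : k ⟶ x} {f : x ⟶ y} (w : ι ≫ f = 0)
    (H : ∀ {T : E} (g : T ⟶ x), g ≫ f = 0 → ∃! l : T ⟶ k, l ≫ ι = g) :
    IsKernelι ι f :=
  ⟨w, ⟨KernelFork.IsLimit.ofι ι w (fun g hg => (H g hg).choose)
      (fun g hg => (H g hg).choose_spec.1)
      (fun g hg m hm => (H g hg).choose_spec.2 m hm)⟩⟩

theorem isPushout_mk {x y x' y' : E} {i : x ⟶ y} {p : x ⟶ x'} {g : y ⟶ y'} {j : x' ⟶ y'}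
    (w : i ≫ g = p ≫ j)
    (H : ∀ {T : E} (a : y ⟶ T) (b : x' ⟶ T), i ≫ a = p ≫ b →
      ∃! d : y' ⟶ T, g ≫ d = a ∧ j ≫ d = b) :
    IsPushout i p g j :=
  IsPushout.of_isColimit' ⟨w⟩ (PushoutCocone.IsColimit.mk w
    (fun s => (H s.inl s.inr s.condition).choose)
    (fun s => (H s.inl s.inr s.condition).choose_spec.1.1)
    (fun s => (H s.inl s.inr s.condition).choose_spec.1.2)
    (fun s m h1 h2 => (H s.inl s.inr s.condition).choose_spec.2 m ⟨h1, h2⟩))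

theorem isPullback_mk {w' x y z : E} {fst : w' ⟶ x} {snd : w' ⟶ y} {f : x ⟶ z} {g : y ⟶ z}
    (w : fst ≫ f = snd ≫ g)
    (H : ∀ {T : E} (a : T ⟶ x) (b : T ⟶ y), a ≫ f = b ≫ g →
      ∃! l : T ⟶ w', l ≫ fst = a ∧ l ≫ snd = b) :
    IsPullback fst snd f g :=
  IsPullback.of_isLimit' ⟨w⟩ (PullbackCone.IsLimit.mk w
    (fun s => (H s.fst s.snd s.condition).choose)
    (fun s => (H s.fst s.snd s.condition).choose_spec.1.1)
    (fun s => (H s.fst s.snd s.condition).choose_spec.1.2)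
    (fun s m h1 h2 => (H s.fst s.snd s.condition).choose_spec.2 m ⟨h1, h2⟩))

theorem isZero_of_isCokernelπ_isIso {x y c : E} {f : x ⟶ y} {π : y ⟶ c}
    (h : IsCokernelπ f π) (hf : IsIso f) : IsZero c := by
  have hπ : π = 0 := by
    rw [← Category.id_comp π, ← IsIso.inv_hom_id f, Category.assoc, h.1, comp_zero]
  rw [IsZero.iff_id_eq_zero]
  exact cokerπ_epi h (by rw [hπ]; simp)

variable (S : ExactStructure E)

/-- Every inclusion admits a cokernel which is a projection (and the inclusion is the
kernel of this cokernel). -/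
theorem exact_of_incl {z₀ : E} (hz₀ : IsZero z₀) {x y : E} {i : x ⟶ y} (hi : S.IsIncl i) :
    ∃ (c : E) (π : y ⟶ c), S.IsProj π ∧ IsKernelι i π ∧ IsCokernelπ i π := by
  obtain ⟨c, g, j, hpo⟩ := S.pushout_incl i (0 : x ⟶ z₀) hi
  have comm : i ≫ g = (0 : x ⟶ z₀) ≫ j := hpo.w
  have hi0 : i ≫ g = 0 := by rw [comm, zero_comp]
  obtain ⟨hj, hg, hpb⟩ := (S.exact_square i 0 g j comm).mp ⟨hi, S.proj_to_zero hz₀ _, hpo⟩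
  refine ⟨c, g, hg, isKernelι_mk hi0 ?_, isCokernelπ_mk hi0 ?_⟩
  · intro T g' hg'
    have hw : g' ≫ g = (0 : T ⟶ z₀) ≫ j := by rw [hg', zero_comp]
    refine ⟨hpb.lift g' 0 hw, hpb.lift_fst g' 0 hw, fun m hm => hpb.hom_ext ?_ (hz₀.eq_of_tgt _ _)⟩
    rw [hm, hpb.lift_fst]
  · intro T g' hg'
    have hw : i ≫ g' = (0 : x ⟶ z₀) ≫ (0 : z₀ ⟶ T) := by rw [hg', zero_comp]
    refine ⟨hpo.desc g' 0 hw, hpo.inl_desc g' 0 hw,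
      fun m hm => hpo.hom_ext ?_ (hz₀.eq_of_src _ _)⟩
    rw [hm, hpo.inl_desc]

/-- If an inclusion admits a cokernel, the cokernel is a projection and the inclusion is the
kernel of the cokernel. -/
theorem incl_coker_exact {z₀ : E} (hz₀ : IsZero z₀) {x' y' Z : E} {j : x' ⟶ y'} {c : y' ⟶ Z}
    (hj : S.IsIncl j) (hc : IsCokernelπ j c) : S.IsProj c ∧ IsKernelι j c := by
  have hcomm : j ≫ c = (0 : x' ⟶ z₀) ≫ (0 : z₀ ⟶ Z) := by rw [hc.1, zero_comp]
  have hpo : IsPushout j (0 : x' ⟶ z₀) c (0 : z₀ ⟶ Z) := by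
    refine isPushout_mk hcomm ?_
    intro T a b hab
    obtain ⟨d, hd, hdu⟩ := cokerπ_desc hc a (by rw [hab, zero_comp])
    exact ⟨d, ⟨hd, hz₀.eq_of_src _ _⟩, fun d' hd' => hdu d' hd'.1⟩
  obtain ⟨_, hcp, hpb⟩ := (S.exact_square j 0 c 0 hcomm).mp ⟨hj, S.proj_to_zero hz₀ _, hpo⟩
  refine ⟨hcp, isKernelι_mk hc.1 ?_⟩
  intro T g hg
  have hw : g ≫ c = (0 : T ⟶ z₀) ≫ (0 : z₀ ⟶ Z) := by rw [hg, zero_comp]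
  refine ⟨hpb.lift g 0 hw, hpb.lift_fst g 0 hw,
    fun m hm => hpb.hom_ext ?_ (hz₀.eq_of_tgt _ _)⟩
  rw [hm, hpb.lift_fst]


set_option maxHeartbeats 1000000 in
/-- The key diagram lemma: the cokernels of the counits form an exact sequence. -/
theorem quotient_exact {z₀ : E} (hz₀ : IsZero z₀)
    {x y z ax ay az Qx Qy Qz : E}
    {i : x ⟶ y} {π : y ⟶ z}
    {εx : ax ⟶ x} {εy : ay ⟶ y} {εz : az ⟶ z}
    {ai : ax ⟶ ay} {aπ : ay ⟶ az}
    {ηx : x ⟶ Qx} {ηy : y ⟶ Qy} {ηz : z ⟶ Qz}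
    {Qi : Qx ⟶ Qy} {Qπ : Qy ⟶ Qz}
    (hex : IsExactSeq S i π) (hA : IsExactSeq S ai aπ)
    (hεy : S.IsIncl εy) (hεz : S.IsIncl εz)
    (hnati : ai ≫ εy = εx ≫ i) (hnatπ : aπ ≫ εz = εy ≫ π)
    (hxP : S.IsProj ηx) (hxK : IsKernelι εx ηx) (hxC : IsCokernelπ εx ηx)
    (hyP : S.IsProj ηy) (hyK : IsKernelι εy ηy) (hyC : IsCokernelπ εy ηy)
    (hzP : S.IsProj ηz) (hzK : IsKernelι εz ηz) (hzC : IsCokernelπ εz ηz)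
    (hQi : ηx ≫ Qi = i ≫ ηy) (hQπ : ηy ≫ Qπ = π ≫ ηz) :
    IsExactSeq S Qi Qπ := by
  obtain ⟨hi, hπp, hiK, hiC⟩ := hex
  obtain ⟨hai, haπ, haK, haC⟩ := hA
  have hiπ0 : i ≫ π = 0 := hiK.1
  have hεxηx : εx ≫ ηx = 0 := hxK.1
  have hεyηy : εy ≫ ηy = 0 := hyK.1
  -- the pushout `w` of `i` along `ηx`
  obtain ⟨w, r, jw, hwpo⟩ := S.pushout_incl i ηx hi
  have hw_comm : i ≫ r = ηx ≫ jw := hwpo.w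
  obtain ⟨hjw, hrP, hwpb⟩ := (S.exact_square i ηx r jw hw_comm).mp ⟨hi, hxP, hwpo⟩
  -- the map `c : w ⟶ z`
  have hcw : i ≫ π = ηx ≫ (0 : Qx ⟶ z) := by rw [hiπ0, comp_zero]
  set c : w ⟶ z := hwpo.desc π 0 hcw with hcdef
  have hrc : r ≫ c = π := hwpo.inl_desc π 0 hcw
  have hjwc : jw ≫ c = (0 : Qx ⟶ z) := hwpo.inr_desc π 0 hcw
  have hc_epi : ∀ {T : E} {a b : z ⟶ T}, c ≫ a = c ≫ b → a = b := by
    intro T a b hab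
    refine cokerπ_epi hiC ?_
    rw [← hrc, Category.assoc, Category.assoc, hab]
  have hcok_jwc : IsCokernelπ jw c := by
    refine isCokernelπ_mk hjwc ?_
    intro T t ht
    have h1 : i ≫ r ≫ t = 0 := by
      rw [← Category.assoc, hw_comm, Category.assoc, ht, comp_zero]
    obtain ⟨s₁, hs₁, _⟩ := cokerπ_desc hiC (r ≫ t) h1
    have fac : c ≫ s₁ = t := by
      refine hwpo.hom_ext ?_ ?_
      · rw [← Category.assoc, hrc, hs₁]
      · rw [← Category.assoc, hjwc, zero_comp, ht]
    exact ⟨s₁, fac, fun m hm => hc_epi (hm.trans fac.symm)⟩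
  obtain ⟨hcP, hjwK⟩ := incl_coker_exact S hz₀ hjw hcok_jwc
  -- the map `t : az ⟶ w`
  have hat : ai ≫ εy ≫ r = 0 := by
    rw [← Category.assoc, hnati, Category.assoc, hw_comm, ← Category.assoc, hεxηx, zero_comp]
  obtain ⟨t, htdef, _⟩ := cokerπ_desc haC (εy ≫ r) hat
  have haπ_epi : ∀ {T : E} {a b : az ⟶ T}, aπ ≫ a = aπ ≫ b → a = b :=
    fun hab => cokerπ_epi haC hab
  -- the square `εy, aπ, r, t` is a pushout
  have hwpo2 : IsPushout εy aπ r t := by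
    refine isPushout_mk htdef.symm ?_
    intro T u v huv
    have h1 : εx ≫ i ≫ u = 0 := by
      rw [← Category.assoc, ← hnati, Category.assoc, huv, ← Category.assoc, haC.1, zero_comp]
    obtain ⟨v', hv', _⟩ := cokerπ_desc hxC (i ≫ u) h1
    have hdw : i ≫ u = ηx ≫ v' := hv'.symm
    refine ⟨hwpo.desc u v' hdw, ⟨hwpo.inl_desc u v' hdw, ?_⟩, ?_⟩
    · refine haπ_epi ?_
      rw [← Category.assoc, htdef, Category.assoc, hwpo.inl_desc, huv]
    · rintro d' ⟨hd1, hd2⟩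
      refine hwpo.hom_ext ?_ ?_
      · rw [hwpo.inl_desc, hd1]
      · rw [hwpo.inr_desc]
        refine cokerπ_epi hxC ?_
        rw [← Category.assoc, ← hw_comm, Category.assoc, hd1, hv']
  obtain ⟨htI, _, _⟩ := (S.exact_square εy aπ r t htdef.symm).mp ⟨hεy, haπ, hwpo2⟩
  -- the map `s : w ⟶ Qy`
  have hsw : i ≫ ηy = ηx ≫ Qi := hQi.symm
  set s : w ⟶ Qy := hwpo.desc ηy Qi hsw with hsdef
  have hrs : r ≫ s = ηy := hwpo.inl_desc ηy Qi hsw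
  have hjws : jw ≫ s = Qi := hwpo.inr_desc ηy Qi hsw
  have hts : t ≫ s = 0 := by
    refine haπ_epi ?_
    rw [← Category.assoc, htdef, Category.assoc, hrs, hεyηy, comp_zero]
  have htc : t ≫ c = εz := by
    refine haπ_epi ?_
    rw [← Category.assoc, htdef, Category.assoc, hrc]
    exact hnatπ.symm
  have hs_epi : ∀ {T : E} {a b : Qy ⟶ T}, s ≫ a = s ≫ b → a = b := by
    intro T a b hab
    refine cokerπ_epi hyC ?_
    rw [← hrs, Category.assoc, Category.assoc, hab]
  have hcok_ts : IsCokernelπ t s := by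
    refine isCokernelπ_mk hts ?_
    intro T u hu
    have h1 : εy ≫ r ≫ u = 0 := by
      rw [← Category.assoc, ← htdef, Category.assoc, hu, comp_zero]
    obtain ⟨v₁, hv₁, _⟩ := cokerπ_desc hyC (r ≫ u) h1
    have fac : s ≫ v₁ = u := by
      refine hwpo2.hom_ext ?_ ?_
      · rw [← Category.assoc, hrs, hv₁]
      · rw [← Category.assoc, hts, zero_comp, hu]
    exact ⟨v₁, fac, fun m hm => hs_epi (hm.trans fac.symm)⟩
  obtain ⟨hsP, htsK⟩ := incl_coker_exact S hz₀ htI hcok_ts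
  -- monomorphism properties
  have hεz_mono : ∀ {T : E} {a b : T ⟶ az}, a ≫ εz = b ≫ εz → a = b :=
    fun hab => kerι_mono hzK hab
  have hjw_mono : ∀ {T : E} {a b : T ⟶ Qx}, a ≫ jw = b ≫ jw → a = b :=
    fun hab => kerι_mono hjwK hab
  have hQi_mono : ∀ {T : E} {a b : T ⟶ Qx}, a ≫ Qi = b ≫ Qi → a = b := by
    intro T a b hab
    have h0 : ((a - b) ≫ jw) ≫ s = 0 := by
      rw [Category.assoc, hjws, Preadditive.sub_comp, hab, sub_self]
    obtain ⟨ρ, hρ, _⟩ := kerι_lift htsK ((a - b) ≫ jw) h0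
    have hρ0 : ρ = 0 := by
      refine hεz_mono ?_
      rw [zero_comp, ← htc, ← Category.assoc, hρ, Category.assoc, hjwc, comp_zero]
    have h7 : (a - b) ≫ jw = 0 := by rw [← hρ, hρ0, zero_comp]
    have h8 : a - b = 0 := hjw_mono (by rw [h7, zero_comp])
    exact sub_eq_zero.mp h8
  -- `Qi ≫ Qπ = 0`
  have hQQ0 : Qi ≫ Qπ = 0 := by
    refine cokerπ_epi hxC ?_
    rw [← Category.assoc, hQi, Category.assoc, hQπ, ← Category.assoc, hiπ0, zero_comp, comp_zero]
  -- epi properties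
  have hπ_epi : ∀ {T : E} {a b : z ⟶ T}, π ≫ a = π ≫ b → a = b :=
    fun hab => cokerπ_epi hiC hab
  have hηz_epi : ∀ {T : E} {a b : Qz ⟶ T}, ηz ≫ a = ηz ≫ b → a = b :=
    fun hab => cokerπ_epi hzC hab
  have hQπ_epi : ∀ {T : E} {a b : Qz ⟶ T}, Qπ ≫ a = Qπ ≫ b → a = b := by
    intro T a b hab
    refine hηz_epi (hπ_epi ?_)
    rw [← Category.assoc, ← hQπ, Category.assoc, hab, ← Category.assoc, hQπ, Category.assoc]
  -- `Qπ` is a cokernel of `Qi`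
  have hcok_Q : IsCokernelπ Qi Qπ := by
    refine isCokernelπ_mk hQQ0 ?_
    intro T t₁ ht₁
    have h1 : i ≫ ηy ≫ t₁ = 0 := by
      rw [← Category.assoc, ← hQi, Category.assoc, ht₁, comp_zero]
    obtain ⟨u, hu, _⟩ := cokerπ_desc hiC (ηy ≫ t₁) h1
    have h2 : εz ≫ u = 0 := by
      refine haπ_epi ?_
      rw [comp_zero, ← Category.assoc, hnatπ, Category.assoc, hu, ← Category.assoc, hεyηy,
        zero_comp]
    obtain ⟨v, hv, _⟩ := cokerπ_desc hzC u h2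
    have fac : Qπ ≫ v = t₁ := by
      refine cokerπ_epi hyC ?_
      rw [← Category.assoc, hQπ, Category.assoc, hv, hu]
    exact ⟨v, fac, fun m hm => hQπ_epi (hm.trans fac.symm)⟩
  -- the pullback `w'`
  obtain ⟨w', g', q'', hpb'⟩ := S.pullback_proj π εz hπp
  have hpb'w : g' ≫ π = q'' ≫ εz := hpb'.w
  obtain ⟨hg'I, _, _⟩ := (S.exact_square g' q'' π εz hpb'w).mpr ⟨hεz, hπp, hpb'⟩
  have hi'w : i ≫ π = (0 : x ⟶ az) ≫ εz := by rw [hiπ0, zero_comp]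
  set i' : x ⟶ w' := hpb'.lift i 0 hi'w with hi'def
  have hi'g : i' ≫ g' = i := hpb'.lift_fst i 0 hi'w
  have hi'q : i' ≫ q'' = 0 := hpb'.lift_snd i 0 hi'w
  set m' : ay ⟶ w' := hpb'.lift εy aπ hnatπ.symm with hm'def
  have hm'g : m' ≫ g' = εy := hpb'.lift_fst εy aπ hnatπ.symm
  have hm'q : m' ≫ q'' = aπ := hpb'.lift_snd εy aπ hnatπ.symm
  -- the map `F : w' ⟶ Qx`
  have hξc : (g' ≫ r - q'' ≫ t) ≫ c = 0 := by
    rw [Preadditive.sub_comp, Category.assoc, Category.assoc, hrc, htc, hpb'w, sub_self]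
  obtain ⟨F, hFjw, _⟩ := kerι_lift hjwK (g' ≫ r - q'' ≫ t) hξc
  have hFQi : F ≫ Qi = g' ≫ ηy := by
    rw [← hjws, ← Category.assoc, hFjw, Preadditive.sub_comp, Category.assoc, Category.assoc,
      hrs, hts, comp_zero, sub_zero]
  have hi'F : i' ≫ F = ηx := by
    refine hjw_mono ?_
    rw [Category.assoc, hFjw, Preadditive.comp_sub, ← Category.assoc, ← Category.assoc,
      hi'g, hi'q, zero_comp, sub_zero, hw_comm]
  have hm'F : m' ≫ F = 0 := by
    refine hjw_mono ?_
    rw [Category.assoc, hFjw, Preadditive.comp_sub, ← Category.assoc, ← Category.assoc,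
      hm'g, hm'q, htdef, sub_self, zero_comp]
  have hcomm2 : g' ≫ ηy = F ≫ Qi := hFQi.symm
  -- the square `g', F, ηy, Qi` is a pullback, hence `F` is a projection
  have hIpb : IsPullback g' F ηy Qi := by
    refine isPullback_mk hcomm2 ?_
    intro T a b hab
    have h5 : (a ≫ π) ≫ ηz = 0 := by
      rw [Category.assoc, ← hQπ, ← Category.assoc, hab, Category.assoc, hQQ0, comp_zero]
    obtain ⟨v, hv, _⟩ := kerι_lift hzK (a ≫ π) h5
    have hlw : a ≫ π = v ≫ εz := hv.symm
    refine ⟨hpb'.lift a v hlw, ⟨hpb'.lift_fst a v hlw, ?_⟩, ?_⟩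
    · refine hQi_mono ?_
      rw [Category.assoc, hFQi, ← Category.assoc, hpb'.lift_fst, hab]
    · rintro l₂ ⟨hl1, hl2⟩
      refine hpb'.hom_ext ?_ ?_
      · rw [hpb'.lift_fst, hl1]
      · rw [hpb'.lift_snd]
        refine hεz_mono ?_
        rw [Category.assoc, ← hpb'w, ← Category.assoc, hl1, hv]
  have hFP : S.IsProj F := S.proj_pullback_stable hIpb hyP
  -- the square `g', F, ηy, Qi` is a pushout, hence `Qi` is an inclusion
  have hIIpo : IsPushout g' F ηy Qi := by
    refine isPushout_mk hcomm2 ?_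
    intro T u v huv
    have h6 : εy ≫ u = 0 := by
      rw [← hm'g, Category.assoc, huv, ← Category.assoc, hm'F, zero_comp]
    obtain ⟨d, hd, _⟩ := cokerπ_desc hyC u h6
    have fac2 : Qi ≫ d = v := by
      refine cokerπ_epi hxC ?_
      rw [← Category.assoc, hQi, Category.assoc, hd, ← hi'g, Category.assoc, huv,
        ← Category.assoc, hi'F]
    refine ⟨d, ⟨hd, fac2⟩, ?_⟩
    rintro d₂ ⟨hd₂, _⟩
    exact cokerπ_epi hyC (by rw [hd₂, hd])
  obtain ⟨hQiI, _, _⟩ := (S.exact_square g' F ηy Qi hcomm2).mp ⟨hg'I, hFP, hIIpo⟩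
  obtain ⟨hQπP, hQK⟩ := incl_coker_exact S hz₀ hQiI hcok_Q
  exact ⟨hQiI, hQπP, hQK, hcok_Q⟩


end Aux

/-- Let `E` be an exact category and `A` an extension-closed full
subcategory whose inclusion admits an exact right adjoint `p` whose counit `ip(x) ⟶ x`
is an inclusion for every `x`.  Let `B` be the full subcategory of objects with
`p(x) ≅ 0`.  Then `q(x) := coker(ip(x) ⟶ x)` defines an exact left adjoint `q` to the
inclusion of `B`, the unit `x ⟶ jq(x)` is a projection and a cokernel of the counit for
every `x`, and `A` coincides with the objects satisfying `q(x) ≅ 0`. -/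
theorem sod_from_right_adjoint {E : Type u} [Category.{v} E] [Preadditive E]
    (S : ExactStructure E) (A : E → Prop)
    (hA₀ : ∃ z : E, IsZero z ∧ A z)
    (hAext : ∀ {u y w : E} (i : u ⟶ y) (π : y ⟶ w), IsExactSeq S i π → A u → A w → A y)
    (p : E ⥤ ObjectProperty.FullSubcategory A) (adjA : ObjectProperty.ι A ⊣ p)
    (hp_zero : ∀ x : E, IsZero x → IsZero ((p ⋙ ObjectProperty.ι A).obj x))
    (hp_exact : ∀ {x y z : E} (i : x ⟶ y) (π : y ⟶ z), IsExactSeq S i π →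
      IsExactSeq S ((p ⋙ ObjectProperty.ι A).map i)
        ((p ⋙ ObjectProperty.ι A).map π))
    (hcounit : ∀ x : E, S.IsIncl (adjA.counit.app x)) :
    ∃ (q : E ⥤ ObjectProperty.FullSubcategory (pKernel p))
      (adjB : q ⊣ ObjectProperty.ι (pKernel p)),
      (∀ x : E, S.IsProj (adjB.unit.app x)) ∧
      (∀ x : E, IsCokernelπ (adjA.counit.app x) (adjB.unit.app x)) ∧
      (∀ x : E, IsZero x →
        IsZero ((q ⋙ ObjectProperty.ι (pKernel p)).obj x)) ∧
      (∀ {x y z : E} (i : x ⟶ y) (π : y ⟶ z), IsExactSeq S i π →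
        IsExactSeq S ((q ⋙ ObjectProperty.ι (pKernel p)).map i)
          ((q ⋙ ObjectProperty.ι (pKernel p)).map π)) ∧
      (∀ x : E, A x ↔
        IsZero ((q ⋙ ObjectProperty.ι (pKernel p)).obj x)) := by
  classical
  obtain ⟨z₀, hz₀, hz₀A⟩ := hA₀
  -- choose the cokernels of the counits
  have hQex : ∀ x : E, ∃ (c : E) (ηx : x ⟶ c),
      S.IsProj ηx ∧ IsKernelι (adjA.counit.app x) ηx ∧ IsCokernelπ (adjA.counit.app x) ηx :=
    fun x => exact_of_incl S hz₀ (hcounit x)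
  choose Q η hη using hQex
  have hηP : ∀ x : E, S.IsProj (η x) := fun x => (hη x).1
  have hηK : ∀ x : E, IsKernelι (adjA.counit.app x) (η x) := fun x => (hη x).2.1
  have hηC : ∀ x : E, IsCokernelπ (adjA.counit.app x) (η x) := fun x => (hη x).2.2
  -- the cokernels lie in `B`
  have hQB : ∀ x : E, pKernel p (Q x) := by
    intro x
    have hse : IsExactSeq S (adjA.counit.app x) (η x) := ⟨hcounit x, hηP x, hηK x, hηC x⟩
    have hme := hp_exact _ _ hse
    haveI h2 : IsIso (adjA.unit.app (p.obj x) ≫ p.map (adjA.counit.app x)) := by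
      rw [adjA.right_triangle_components x]
      exact IsIso.id _
    haveI h3 : IsIso (p.map (adjA.counit.app x)) :=
      IsIso.of_isIso_comp_left (adjA.unit.app (p.obj x)) (p.map (adjA.counit.app x))
    have h4 : IsIso ((p ⋙ ObjectProperty.ι A).map (adjA.counit.app x)) :=
      (inferInstance : IsIso ((ObjectProperty.ι A).map (p.map (adjA.counit.app x))))
    exact isZero_of_isCokernelπ_isIso hme.2.2.2 h4
  -- any map from `x` to an object of `B` kills the counit
  have hεg : ∀ (x : E) (Y : ObjectProperty.FullSubcategory (pKernel p)) (g : x ⟶ Y.obj),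
      adjA.counit.app x ≫ g = 0 := by
    intro x Y g
    have hnat := adjA.counit.naturality g
    simp only [Functor.id_obj, Functor.id_map] at hnat
    have hz : (p ⋙ ObjectProperty.ι A).map g = 0 := Y.property.eq_of_tgt _ _
    rw [← hnat, hz, zero_comp]
  -- the adjunction
  let e : ∀ (x : E) (Y : ObjectProperty.FullSubcategory (pKernel p)),
      ((⟨Q x, hQB x⟩ : ObjectProperty.FullSubcategory (pKernel p)) ⟶ Y) ≃
        (x ⟶ (ObjectProperty.ι (pKernel p)).obj Y) := fun x Y =>
    { toFun := fun f => η x ≫ f.hom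
      invFun := fun g => ObjectProperty.homMk (cokerπ_desc (hηC x) g (hεg x Y g)).choose
      left_inv := fun f => ObjectProperty.hom_ext (h :=
        ((cokerπ_desc (hηC x) (η x ≫ f.hom) (hεg x Y _)).choose_spec.2 f.hom rfl).symm)
      right_inv := fun g => (cokerπ_desc (hηC x) g (hεg x Y g)).choose_spec.1 }
  have he : ∀ (x : E) (Y Y' : ObjectProperty.FullSubcategory (pKernel p)) (g : Y ⟶ Y')
      (h : (⟨Q x, hQB x⟩ : ObjectProperty.FullSubcategory (pKernel p)) ⟶ Y),
      e x Y' (h ≫ g) = e x Y h ≫ (ObjectProperty.ι (pKernel p)).map g :=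
    fun x Y Y' g h => (Category.assoc _ _ _).symm
  let q : E ⥤ ObjectProperty.FullSubcategory (pKernel p) := Adjunction.leftAdjointOfEquiv e he
  let adjB : q ⊣ ObjectProperty.ι (pKernel p) := Adjunction.adjunctionOfEquivLeft e he
  have hunit : ∀ x : E, adjB.unit.app x = η x := fun x => Category.comp_id (η x)
  have hQnat : ∀ {a b : E} (f : a ⟶ b),
      η a ≫ (q ⋙ ObjectProperty.ι (pKernel p)).map f = f ≫ η b := by
    intro a b f
    have hn := adjB.unit.naturality f
    simp only [Functor.id_obj, Functor.id_map] at hn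
    rw [hunit a, hunit b] at hn
    exact hn.symm
  refine ⟨q, adjB, fun x => by rw [hunit x]; exact hηP x,
    fun x => by rw [hunit x]; exact hηC x, ?_, ?_, ?_⟩
  · -- `q` preserves zero objects
    intro x hx
    have hη0 : η x = 0 := hx.eq_of_src _ _
    have hZ : IsZero (Q x) := by
      rw [IsZero.iff_id_eq_zero]
      exact cokerπ_epi (hηC x) (by rw [hη0]; simp)
    exact hZ
  · -- `q` is exact
    intro x y z' i π hexx
    have hnati := adjA.counit.naturality i
    have hnatπ := adjA.counit.naturality π
    simp only [Functor.id_obj, Functor.id_map] at hnati hnatπ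
    exact quotient_exact S hz₀ hexx (hp_exact i π hexx) (hcounit y) (hcounit z')
      hnati hnatπ (hηP x) (hηK x) (hηC x) (hηP y) (hηK y) (hηC y) (hηP z') (hηK z') (hηC z')
      (hQnat i) (hQnat π)
  · -- `A` is the kernel of `q`
    intro x
    constructor
    · intro hx
      have h3 : IsIso (adjA.counit.app x) :=
        adjA.isIso_counit_app_of_iso (Y := ⟨x, hx⟩) (Iso.refl x)
      exact isZero_of_isCokernelπ_isIso (hηC x) h3
    · intro hzz
      have hz' : IsZero (Q x) := hzz
      have hη0 : η x = 0 := hz'.eq_of_tgt _ _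
      obtain ⟨l, hl, _⟩ := kerι_lift (hηK x) (𝟙 x) (by rw [Category.id_comp, hη0])
      have hεl : adjA.counit.app x ≫ l = 𝟙 _ := by
        refine kerι_mono (hηK x) ?_
        rw [Category.assoc, hl]; simp
      have hseq : IsExactSeq S (adjA.counit.app x) (0 : x ⟶ z₀) := by
        refine ⟨hcounit x, S.proj_to_zero hz₀ _, isKernelι_mk comp_zero ?_,
          isCokernelπ_mk comp_zero ?_⟩
        · intro T g hg
          refine ⟨g ≫ l, ?_, ?_⟩
          · show (g ≫ l) ≫ adjA.counit.app x = g
            rw [Category.assoc, hl]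
            simp
          · intro m hm
            have hm' : m ≫ adjA.counit.app x = g := hm
            rw [← hm', Category.assoc, hεl]
            simp
        · intro T g hg
          have hg' : adjA.counit.app x ≫ g = 0 := hg
          have hg0 : g = 0 := by
            simpa [← Category.assoc, hl] using congrArg (fun t => l ≫ t) hg'
          refine ⟨0, ?_, fun m _ => hz₀.eq_of_src _ _⟩
          show (0 : x ⟶ z₀) ≫ (0 : z₀ ⟶ T) = g
          rw [hg0, zero_comp]
      exact hAext _ _ hseq (p.obj x).property hz₀A


end ExactPaper
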